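/- The KKT triple for the ED problem is unique: if (P¹, λ¹, μ¹) and (P², λ², μ²) are both KKT triples for the ED problem, then P¹ = P², λ¹ = λ², and μ¹ = μ². -/
import Mathlib


open Finset

noncomputable section

/-- Feasible production profiles for the dispatch problems:
power balance `1ᵀP = 1ᵀP_d` and componentwise nonnegativity. -/
def Feasible {n : ℕ} (Pd P : Fin n → ℝ) : Prop :=
  (∑ i, P i = ∑ i, Pd i) ∧ ∀ i, 0 ≤ P i

/-- `P` is an optimizer of the ISO problem for bids `b`:
it minimizes `bᵀP` over the feasible set. -/
def IsISOOpt {n : ℕ} (Pd b P : Fin n → ℝ) : Prop :=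
  Feasible Pd P ∧ ∀ Q, Feasible Pd Q → ∑ i, b i * P i ≤ ∑ i, b i * Q i

/-- `P` is a minimizer of the economic dispatch (ED) problem. -/
def IsEDOpt {n : ℕ} (C : Fin n → ℝ → ℝ) (Pd P : Fin n → ℝ) : Prop :=
  Feasible Pd P ∧ ∀ Q, Feasible Pd Q → ∑ i, C i (P i) ≤ ∑ i, C i (Q i)

/-- `(P, lam, mu)` is a KKT triple for the ED problem, with `C' i` the marginal
cost of generator `i`. -/
def IsKKT {n : ℕ} (C' : Fin n → ℝ → ℝ) (Pd P : Fin n → ℝ) (lam : ℝ)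
    (mu : Fin n → ℝ) : Prop :=
  (∀ i, C' i (P i) = lam + mu i) ∧ (∑ i, P i = ∑ i, Pd i) ∧
    (∀ i, 0 ≤ P i) ∧ (∀ i, 0 ≤ mu i) ∧ (∑ i, P i * mu i = 0)

/-- Payoff of a generator with cost `Ci` bidding `bi` and producing `Pi`. -/
def Payoff (Ci : ℝ → ℝ) (bi Pi : ℝ) : ℝ := Pi * bi - Ci Pi

/-- `bstar` is a Nash equilibrium of the inelastic electricity market game. -/
def IsNash {n : ℕ} (C : Fin n → ℝ → ℝ) (Pd bstar : Fin n → ℝ) : Prop :=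
  (∀ i, 0 ≤ bstar i) ∧
  ∃ P0, IsISOOpt Pd bstar P0 ∧
    ∀ i (bi : ℝ), 0 ≤ bi → bi ≠ bstar i →
      ∀ P, IsISOOpt Pd (Function.update bstar i bi) P →
        Payoff (C i) bi (P i) ≤ Payoff (C i) (bstar i) (P0 i)

/-- `bstar` is an efficient bid: the optimizer of the ED problem is also an
optimizer of the ISO problem for bids `bstar`, and each `Pstar i` maximizes
the profit `P ↦ P * bstar i - C i P` over `P ≥ 0`. -/
def IsEfficientBid {n : ℕ} (C : Fin n → ℝ → ℝ) (Pd bstar : Fin n → ℝ) : Prop :=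
  (∀ i, 0 ≤ bstar i) ∧
  ∀ Pstar, IsEDOpt C Pd Pstar →
    IsISOOpt Pd bstar Pstar ∧
      ∀ i, ∀ P, 0 ≤ P → Payoff (C i) (bstar i) P ≤ Payoff (C i) (bstar i) (Pstar i)

/-- Standing assumptions on a generator cost function: continuously
differentiable with derivative `Cf'`, strongly convex on `[0, ∞)`, and
nonnegative marginal cost at zero. -/
def CostAssumptions (Cf Cf' : ℝ → ℝ) : Prop :=
  (∀ x, HasDerivAt Cf (Cf' x) x) ∧ Continuous Cf' ∧
    (∃ m : ℝ, 0 < m ∧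
      ∀ x y, 0 ≤ x → 0 ≤ y → (Cf' x - Cf' y) * (x - y) ≥ m * (x - y) ^ 2) ∧
    0 ≤ Cf' 0

/-- `P` is the unique maximizer of the profit `Q ↦ β * Q - Cf Q` over `Q ≥ 0`. -/
def IsUniqueArgmaxProfit (Cf : ℝ → ℝ) (β P : ℝ) : Prop :=
  0 ≤ P ∧ (∀ Q, 0 ≤ Q → β * Q - Cf Q ≤ β * P - Cf P) ∧
    ∀ Q, 0 ≤ Q → (∀ R, 0 ≤ R → β * R - Cf R ≤ β * Q - Cf Q) → Q = P

/-- The KKT triple for the ED problem is unique. -/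
theorem kkt_triple_unique {n : ℕ} (hn : 1 ≤ n)
    (C C' : Fin n → ℝ → ℝ) (hC : ∀ i, CostAssumptions (C i) (C' i))
    (Pd : Fin n → ℝ) (hPd : ∀ i, 0 ≤ Pd i) (hPdpos : 0 < ∑ i, Pd i)
    (P₁ P₂ : Fin n → ℝ) (lam₁ lam₂ : ℝ) (mu₁ mu₂ : Fin n → ℝ)
    (hKKT₁ : IsKKT C' Pd P₁ lam₁ mu₁) (hKKT₂ : IsKKT C' Pd P₂ lam₂ mu₂) :
    P₁ = P₂ ∧ lam₁ = lam₂ ∧ mu₁ = mu₂ := by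
  obtain ⟨hg₁, hb₁, hnn₁, hmnn₁, hcomp₁⟩ := hKKT₁
  obtain ⟨hg₂, hb₂, hnn₂, hmnn₂, hcomp₂⟩ := hKKT₂
  -- termwise complementarity
  have hterm₁ : ∀ i, P₁ i * mu₁ i = 0 := by
    intro i
    have := (Finset.sum_eq_zero_iff_of_nonneg (fun j _ =>
      mul_nonneg (hnn₁ j) (hmnn₁ j))).mp hcomp₁
    exact this i (Finset.mem_univ i)
  have hterm₂ : ∀ i, P₂ i * mu₂ i = 0 := by
    intro i
    have := (Finset.sum_eq_zero_iff_of_nonneg (fun j _ =>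
      mul_nonneg (hnn₂ j) (hmnn₂ j))).mp hcomp₂
    exact this i (Finset.mem_univ i)
  -- key sum is ≤ 0
  have hkey : ∑ i, (C' i (P₁ i) - C' i (P₂ i)) * (P₁ i - P₂ i) ≤ 0 := by
    have hrw : ∀ i, (C' i (P₁ i) - C' i (P₂ i)) * (P₁ i - P₂ i)
        = (lam₁ - lam₂) * (P₁ i - P₂ i)
          - P₂ i * mu₁ i - P₁ i * mu₂ i := by
      intro i
      have h1 := hg₁ i
      have h2 := hg₂ i
      have e1 : P₁ i * mu₁ i = 0 := hterm₁ i
      have e2 : P₂ i * mu₂ i = 0 := hterm₂ i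
      linear_combination (P₁ i - P₂ i) * h1 - (P₁ i - P₂ i) * h2 + e1 + e2
    calc ∑ i, (C' i (P₁ i) - C' i (P₂ i)) * (P₁ i - P₂ i)
        = ∑ i, ((lam₁ - lam₂) * (P₁ i - P₂ i) - P₂ i * mu₁ i - P₁ i * mu₂ i) := by
          exact Finset.sum_congr rfl (fun i _ => hrw i)
      _ = (lam₁ - lam₂) * (∑ i, P₁ i - ∑ i, P₂ i)
            - ∑ i, P₂ i * mu₁ i - ∑ i, P₁ i * mu₂ i := by
          simp only [mul_sub, Finset.mul_sum, Finset.sum_sub_distrib]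
      _ ≤ 0 := by
          have hs : ∑ i, P₁ i - ∑ i, P₂ i = 0 := by rw [hb₁, hb₂]; ring
          have h3 : 0 ≤ ∑ i, P₂ i * mu₁ i :=
            Finset.sum_nonneg (fun i _ => mul_nonneg (hnn₂ i) (hmnn₁ i))
          have h4 : 0 ≤ ∑ i, P₁ i * mu₂ i :=
            Finset.sum_nonneg (fun i _ => mul_nonneg (hnn₁ i) (hmnn₂ i))
          rw [hs]
          linarith
  -- each term nonneg, hence zero, hence P₁ = P₂ pointwise
  have hPeq : ∀ i, P₁ i = P₂ i := by
    have htnn : ∀ i ∈ Finset.univ, (0:ℝ) ≤ (C' i (P₁ i) - C' i (P₂ i)) * (P₁ i - P₂ i) := by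
      intro i _
      obtain ⟨_, _, ⟨m, hm, hsc⟩, _⟩ := hC i
      have := hsc (P₁ i) (P₂ i) (hnn₁ i) (hnn₂ i)
      nlinarith [sq_nonneg (P₁ i - P₂ i)]
    have hzero : ∀ i ∈ Finset.univ, (C' i (P₁ i) - C' i (P₂ i)) * (P₁ i - P₂ i) = 0 := by
      have hle0 : ∑ i, (C' i (P₁ i) - C' i (P₂ i)) * (P₁ i - P₂ i) = 0 :=
        le_antisymm hkey (Finset.sum_nonneg htnn)
      exact (Finset.sum_eq_zero_iff_of_nonneg htnn).mp hle0
    intro i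
    obtain ⟨_, _, ⟨m, hm, hsc⟩, _⟩ := hC i
    have h1 := hsc (P₁ i) (P₂ i) (hnn₁ i) (hnn₂ i)
    have h2 := hzero i (Finset.mem_univ i)
    have hsq : m * (P₁ i - P₂ i) ^ 2 ≤ 0 := h2 ▸ h1
    have h3 : (P₁ i - P₂ i) ^ 2 = 0 := by
      nlinarith [sq_nonneg (P₁ i - P₂ i)]
    have := pow_eq_zero_iff (n := 2) (by norm_num) |>.mp h3
    linarith [this]
  have hP : P₁ = P₂ := funext hPeq
  -- find j with P₁ j > 0
  have hjex : ∃ j, 0 < P₁ j := by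
    by_contra h
    push_neg at h
    have : ∀ j, P₁ j = 0 := fun j => le_antisymm (h j) (hnn₁ j)
    have : ∑ i, P₁ i = 0 := Finset.sum_eq_zero (fun i _ => this i)
    rw [hb₁] at this
    linarith
  obtain ⟨j, hj⟩ := hjex
  have hm1j : mu₁ j = 0 := by
    have := hterm₁ j
    rcases mul_eq_zero.mp this with h | h
    · exact absurd h (ne_of_gt hj)
    · exact h
  have hm2j : mu₂ j = 0 := by
    have hj2 : 0 < P₂ j := hPeq j ▸ hj
    have := hterm₂ j
    rcases mul_eq_zero.mp this with h | h
    · exact absurd h (ne_of_gt hj2)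
    · exact h
  have hlam : lam₁ = lam₂ := by
    have h1 := hg₁ j
    have h2 := hg₂ j
    rw [hPeq j] at h1
    rw [hm1j] at h1; rw [hm2j] at h2
    linarith
  refine ⟨hP, hlam, funext fun i => ?_⟩
  have h1 := hg₁ i
  have h2 := hg₂ i
  rw [hPeq i] at h1
  linarith
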